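/- Fix N ≥ 1, real numbers d_i > 0 (i = 1, …, N), β > 0, c > 0, and set λ_{1i} = (−c + √(c² + 4βd_i))/(2d_i) and λ_{2i} = (c + √(c² + 4βd_i))/(2d_i), so that −λ_{1i} and λ_{2i} are the two roots of d_iλ² − cλ − β = 0. Let k ∈ ℝ^N with k ≫ 0 and let f : [0, k] → ℝ^N be continuous. For continuous u : ℝ → [0, k] define T_i[u](ξ) = (1/(d_i(λ_{1i} + λ_{2i}))) (∫_{−∞}^{ξ} e^{−λ_{1i}(ξ−s)} (βu_i(s) + f_i(u(s))) ds + ∫_{ξ}^{∞} e^{λ_{2i}(ξ−s)} (βu_i(s) + f_i(u(s))) ds). If u : ℝ → [0, k] is continuous and satisfies u_i(ξ) = T_i[u](ξ) for all ξ ∈ ℝ and all i, then each u_i is twice continuously differentiable on ℝ and d_i u_i''(ξ) − c u_i'(ξ) + f_i(u(ξ)) = 0 for all ξ ∈ ℝ and all i. -/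

import Mathlib

open MeasureTheory

section Helpers
open Set Real

lemma myexp_Iic {b : ℝ} (hb : 0 < b) (ξ : ℝ) :
    IntegrableOn (fun x : ℝ => Real.exp (b * x)) (Set.Iic ξ) := by
  rw [← (Measure.measurePreserving_neg (volume : Measure ℝ)).integrableOn_comp_preimage
      (Homeomorph.neg ℝ).measurableEmbedding]
  have : (fun x : ℝ => Real.exp (b * x)) ∘ (Neg.neg) = fun x : ℝ => Real.exp (-b * x) := by
    funext x; simp [Function.comp, neg_mul, mul_neg]
  rw [this]
  simp only [neg_preimage, neg_Iic]
  exact Iff.mpr integrableOn_Ici_iff_integrableOn_Ioi (exp_neg_integrableOn_Ioi _ hb)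

lemma myexp_Ici {b : ℝ} (hb : 0 < b) (ξ : ℝ) :
    IntegrableOn (fun x : ℝ => Real.exp (-b * x)) (Set.Ici ξ) :=
  Iff.mpr integrableOn_Ici_iff_integrableOn_Ioi (exp_neg_integrableOn_Ioi _ hb)

lemma my_integral_Ici_sub_Ici {h : ℝ → ℝ} {a b : ℝ} (ha : IntegrableOn h (Set.Ici a))
    (hb : IntegrableOn h (Set.Ici b)) :
    (∫ x in Set.Ici a, h x) - ∫ x in Set.Ici b, h x = ∫ x in a..b, h x := by
  wlog hab : a ≤ b generalizing a b
  · rw [intervalIntegral.integral_symm, ← this hb ha (le_of_not_ge hab), neg_sub]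
  rw [integral_Ici_eq_integral_Ioi, integral_Ici_eq_integral_Ioi,
    intervalIntegral.integral_of_le hab, sub_eq_iff_eq_add']
  rw [add_comm, ← setIntegral_union (Ioc_disjoint_Ioi le_rfl) measurableSet_Ioi
      (ha.mono_set (Set.Ioc_subset_Icc_self.trans Set.Icc_subset_Ici_self)) (hb.mono_set Ioi_subset_Ici_self),
    Ioc_union_Ioi_eq_Ioi hab]

end Helpers

/-- The integral operator `T` of (4.13): componentwise,
`T_i[u](ξ) = (1/(d_i(λ₁ᵢ+λ₂ᵢ))) (∫_{-∞}^{ξ} e^{-λ₁ᵢ(ξ-s)} (βuᵢ(s)+fᵢ(u(s))) ds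
             + ∫_{ξ}^{∞} e^{λ₂ᵢ(ξ-s)} (βuᵢ(s)+fᵢ(u(s))) ds)`,
where `-λ₁ᵢ, λ₂ᵢ` are the roots of `dᵢλ² - cλ - β = 0`. -/
noncomputable def Tint {N : ℕ} (d : Fin N → ℝ) (β c : ℝ)
    (f : (Fin N → ℝ) → (Fin N → ℝ)) (u : ℝ → (Fin N → ℝ)) (i : Fin N) (ξ : ℝ) : ℝ :=
  let l₁ : ℝ := (-c + Real.sqrt (c ^ 2 + 4 * β * d i)) / (2 * d i)
  let l₂ : ℝ := (c + Real.sqrt (c ^ 2 + 4 * β * d i)) / (2 * d i)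
  (1 / (d i * (l₁ + l₂))) *
    ((∫ s in Set.Iic ξ, Real.exp (-l₁ * (ξ - s)) * (β * u s i + f (u s) i)) +
     (∫ s in Set.Ici ξ, Real.exp (l₂ * (ξ - s)) * (β * u s i + f (u s) i)))

theorem stmt_13 (N : ℕ) (hN : 1 ≤ N) (d : Fin N → ℝ) (hd : ∀ i, 0 < d i)
    (β c : ℝ) (hβ : 0 < β) (hc : 0 < c)
    (k : Fin N → ℝ) (hk : ∀ i, 0 < k i)
    (f : (Fin N → ℝ) → (Fin N → ℝ)) (hf : ContinuousOn f (Set.Icc 0 k))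
    (u : ℝ → (Fin N → ℝ)) (hu : Continuous u)
    (hrange : ∀ ξ, u ξ ∈ Set.Icc (0 : Fin N → ℝ) k)
    (hfix : ∀ i ξ, u ξ i = Tint d β c f u i ξ) :
    ∀ i, ContDiff ℝ 2 (fun ξ => u ξ i) ∧
      ∀ ξ, d i * deriv (deriv (fun ξ => u ξ i)) ξ
            - c * deriv (fun ξ => u ξ i) ξ + f (u ξ) i = 0 := by
  intro i
  have hdi := hd i
  have hdisc : (0:ℝ) < c ^ 2 + 4 * β * d i := by positivity
  set s0 : ℝ := Real.sqrt (c ^ 2 + 4 * β * d i) with hs0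
  have hs0pos : 0 < s0 := Real.sqrt_pos.mpr hdisc
  have hs0sq : s0 ^ 2 = c ^ 2 + 4 * β * d i := Real.sq_sqrt hdisc.le
  set l₁ : ℝ := (-c + s0) / (2 * d i) with hl₁
  set l₂ : ℝ := (c + s0) / (2 * d i) with hl₂
  have hcs0 : c < s0 := by nlinarith
  have hl₁pos : 0 < l₁ := div_pos (by linarith) (by positivity)
  have hl₂pos : 0 < l₂ := div_pos (by linarith) (by positivity)
  have hroot1 : d i * l₁ ^ 2 + c * l₁ = β := by
    rw [hl₁]; field_simp; nlinarith [hs0sq]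
  have hroot2 : d i * l₂ ^ 2 - c * l₂ = β := by
    rw [hl₂]; field_simp; nlinarith [hs0sq]
  have hK : d i * (l₁ + l₂) = s0 := by
    rw [hl₁, hl₂]; field_simp; ring
  -- the function g
  set g : ℝ → ℝ := fun s => β * u s i + f (u s) i with hgdef
  have hfu : Continuous fun s => f (u s) := hf.comp_continuous hu fun x => hrange x
  have hg : Continuous g :=
    (continuous_const.mul ((continuous_apply i).comp hu)).add ((continuous_apply i).comp hfu)
  -- the two auxiliary primitives
  have hg1 : Continuous fun s => Real.exp (l₁ * s) * g s :=
    (Real.continuous_exp.comp (continuous_const.mul continuous_id)).mul hg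
  have hg2 : Continuous fun s => Real.exp (-l₂ * s) * g s :=
    (Real.continuous_exp.comp (continuous_const.mul continuous_id)).mul hg
  -- bound on g
  obtain ⟨C, hC⟩ := IsCompact.exists_bound_of_continuousOn isCompact_Icc hf
  have hM : ∀ s, |g s| ≤ β * k i + C := by
    intro s
    have h1 : 0 ≤ u s i := (hrange s).1 i
    have h2 : u s i ≤ k i := (hrange s).2 i
    have h3 : |f (u s) i| ≤ C := by
      calc |f (u s) i| ≤ ‖f (u s)‖ := norm_le_pi_norm (f (u s)) i
        _ ≤ C := hC _ (hrange s)
    calc |g s| ≤ |β * u s i| + |f (u s) i| := abs_add_le _ _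
      _ ≤ β * k i + C := by
          refine add_le_add ?_ h3
          rw [abs_of_nonneg (by positivity)]
          exact mul_le_mul_of_nonneg_left h2 hβ.le
  have hMnn : 0 ≤ β * k i + C := le_trans (abs_nonneg _) (hM 0)
  have hInt1 : ∀ ξ, IntegrableOn (fun s => Real.exp (l₁ * s) * g s) (Set.Iic ξ) := by
    intro ξ
    refine Integrable.mono' ((myexp_Iic hl₁pos ξ).const_mul (β * k i + C))
      hg1.aestronglyMeasurable ?_
    filter_upwards with s
    rw [Real.norm_eq_abs, abs_mul, Real.abs_exp]
    calc Real.exp (l₁ * s) * |g s| ≤ Real.exp (l₁ * s) * (β * k i + C) :=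
          mul_le_mul_of_nonneg_left (hM s) (Real.exp_pos _).le
      _ = (β * k i + C) * Real.exp (l₁ * s) := mul_comm _ _
  have hInt2 : ∀ ξ, IntegrableOn (fun s => Real.exp (-l₂ * s) * g s) (Set.Ici ξ) := by
    intro ξ
    refine Integrable.mono' ((myexp_Ici hl₂pos ξ).const_mul (β * k i + C))
      hg2.aestronglyMeasurable ?_
    filter_upwards with s
    rw [Real.norm_eq_abs, abs_mul, Real.abs_exp]
    calc Real.exp (-l₂ * s) * |g s| ≤ Real.exp (-l₂ * s) * (β * k i + C) :=
          mul_le_mul_of_nonneg_left (hM s) (Real.exp_pos _).le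
      _ = (β * k i + C) * Real.exp (-l₂ * s) := mul_comm _ _
  set A : ℝ → ℝ := fun ξ => ∫ s in Set.Iic ξ, Real.exp (l₁ * s) * g s with hAdef
  set B : ℝ → ℝ := fun ξ => ∫ s in Set.Ici ξ, Real.exp (-l₂ * s) * g s with hBdef
  -- representation of u i via A, B
  have hrep : ∀ ξ, u ξ i = (1 / s0) * (Real.exp (-l₁ * ξ) * A ξ + Real.exp (l₂ * ξ) * B ξ) := by
    intro ξ
    rw [hfix i ξ]
    show (1 / (d i * (l₁ + l₂))) *
      ((∫ s in Set.Iic ξ, Real.exp (-l₁ * (ξ - s)) * (β * u s i + f (u s) i)) +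
       (∫ s in Set.Ici ξ, Real.exp (l₂ * (ξ - s)) * (β * u s i + f (u s) i))) = _
    rw [hK]
    congr 1
    have e1 : ∀ s : ℝ, Real.exp (-l₁ * (ξ - s)) * (β * u s i + f (u s) i)
        = Real.exp (-l₁ * ξ) * (Real.exp (l₁ * s) * g s) := by
      intro s; rw [← mul_assoc, ← Real.exp_add, hgdef]; ring_nf
    have e2 : ∀ s : ℝ, Real.exp (l₂ * (ξ - s)) * (β * u s i + f (u s) i)
        = Real.exp (l₂ * ξ) * (Real.exp (-l₂ * s) * g s) := by
      intro s; rw [← mul_assoc, ← Real.exp_add, hgdef]; ring_nf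
    simp_rw [e1, e2, integral_const_mul]
    rfl
  -- derivatives of A and B
  have hA : ∀ ξ, HasDerivAt A (Real.exp (l₁ * ξ) * g ξ) ξ := by
    intro ξ
    have h1 : A = fun t => A 0 + ∫ s in (0:ℝ)..t, Real.exp (l₁ * s) * g s := by
      funext t
      rw [← intervalIntegral.integral_Iic_sub_Iic (hInt1 0) (hInt1 t), hAdef]
      ring
    rw [h1]
    exact ((intervalIntegral.integral_hasDerivAt_right ((hg1.intervalIntegrable _ _))
      (hg1.stronglyMeasurable.stronglyMeasurableAtFilter) hg1.continuousAt).const_add _)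
  have hB : ∀ ξ, HasDerivAt B (-(Real.exp (-l₂ * ξ) * g ξ)) ξ := by
    intro ξ
    have h1 : B = fun t => B 0 - ∫ s in (0:ℝ)..t, Real.exp (-l₂ * s) * g s := by
      funext t
      rw [← my_integral_Ici_sub_Ici (hInt2 0) (hInt2 t), hBdef]
      ring
    rw [h1]
    exact (((intervalIntegral.integral_hasDerivAt_right ((hg2.intervalIntegrable _ _))
      (hg2.stronglyMeasurable.stronglyMeasurableAtFilter) hg2.continuousAt)).const_sub _)
  have hAcont : Continuous A := continuous_iff_continuousAt.mpr fun ξ => (hA ξ).continuousAt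
  have hBcont : Continuous B := continuous_iff_continuousAt.mpr fun ξ => (hB ξ).continuousAt
  have key1 : ∀ ξ : ℝ, Real.exp (-l₁ * ξ) * Real.exp (l₁ * ξ) = 1 := by
    intro ξ; rw [← Real.exp_add, neg_mul, neg_add_cancel, Real.exp_zero]
  have key2 : ∀ ξ : ℝ, Real.exp (l₂ * ξ) * Real.exp (-l₂ * ξ) = 1 := by
    intro ξ; rw [← Real.exp_add, neg_mul, add_neg_cancel, Real.exp_zero]
  -- derivative of the two products
  have hF : ∀ ξ, HasDerivAt (fun t => Real.exp (-l₁ * t) * A t)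
      (-l₁ * (Real.exp (-l₁ * ξ) * A ξ) + g ξ) ξ := by
    intro ξ
    have h1 : HasDerivAt (fun t => Real.exp (-l₁ * t)) (Real.exp (-l₁ * ξ) * -l₁) ξ := by
      simpa using ((hasDerivAt_id ξ).const_mul (-l₁)).exp
    have := h1.mul (hA ξ)
    refine this.congr_deriv ?_
    rw [show Real.exp (-l₁ * ξ) * (Real.exp (l₁ * ξ) * g ξ) = g ξ by
      rw [← mul_assoc, key1 ξ, one_mul]]
    ring
  have hG : ∀ ξ, HasDerivAt (fun t => Real.exp (l₂ * t) * B t)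
      (l₂ * (Real.exp (l₂ * ξ) * B ξ) - g ξ) ξ := by
    intro ξ
    have h1 : HasDerivAt (fun t => Real.exp (l₂ * t)) (Real.exp (l₂ * ξ) * l₂) ξ := by
      simpa using ((hasDerivAt_id ξ).const_mul l₂).exp
    have := h1.mul (hB ξ)
    refine this.congr_deriv ?_
    rw [mul_neg, show Real.exp (l₂ * ξ) * (Real.exp (-l₂ * ξ) * g ξ) = g ξ by
      rw [← mul_assoc, key2 ξ, one_mul]]
    ring
  -- first derivative of u i
  set v : ℝ → ℝ := fun ξ => (1 / s0) *
      (-l₁ * (Real.exp (-l₁ * ξ) * A ξ) + l₂ * (Real.exp (l₂ * ξ) * B ξ)) with hvdef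
  have hufun : (fun ξ => u ξ i) = fun ξ =>
      (1 / s0) * (Real.exp (-l₁ * ξ) * A ξ + Real.exp (l₂ * ξ) * B ξ) := funext hrep
  have hu' : ∀ ξ, HasDerivAt (fun ξ => u ξ i) (v ξ) ξ := by
    intro ξ
    rw [hufun]
    have := ((hF ξ).add (hG ξ)).const_mul (1 / s0)
    refine this.congr_deriv ?_
    rw [hvdef]; ring
  -- second derivative
  set w : ℝ → ℝ := fun ξ => (1 / s0) *
      (l₁ ^ 2 * (Real.exp (-l₁ * ξ) * A ξ) + l₂ ^ 2 * (Real.exp (l₂ * ξ) * B ξ)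
        - (l₁ + l₂) * g ξ) with hwdef
  have hv' : ∀ ξ, HasDerivAt v (w ξ) ξ := by
    intro ξ
    have := (((hF ξ).const_mul (-l₁)).add ((hG ξ).const_mul l₂)).const_mul (1 / s0)
    refine this.congr_deriv ?_
    rw [hwdef]; ring
  have hderiv1 : deriv (fun ξ => u ξ i) = v := funext fun ξ => (hu' ξ).deriv
  have hderiv2 : deriv v = w := funext fun ξ => (hv' ξ).deriv
  have hwcont : Continuous w := by
    apply continuous_const.mul
    exact ((continuous_const.mul ((Real.continuous_exp.comp
        (continuous_const.mul continuous_id)).mul hAcont)).add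
      (continuous_const.mul ((Real.continuous_exp.comp
        (continuous_const.mul continuous_id)).mul hBcont))).sub (continuous_const.mul hg)
  constructor
  · rw [show (2 : WithTop ℕ∞) = 1 + 1 from rfl, contDiff_succ_iff_deriv]
    refine ⟨fun ξ => (hu' ξ).differentiableAt, by simp, ?_⟩
    rw [hderiv1, contDiff_one_iff_deriv]
    exact ⟨fun ξ => (hv' ξ).differentiableAt, by rw [hderiv2]; exact hwcont⟩
  · intro ξ
    rw [hderiv1, hderiv2]
    show d i * ((1 / s0) * (l₁ ^ 2 * (Real.exp (-l₁ * ξ) * A ξ)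
        + l₂ ^ 2 * (Real.exp (l₂ * ξ) * B ξ) - (l₁ + l₂) * g ξ))
      - c * ((1 / s0) * (-l₁ * (Real.exp (-l₁ * ξ) * A ξ)
        + l₂ * (Real.exp (l₂ * ξ) * B ξ))) + f (u ξ) i = 0
    have hFG : Real.exp (-l₁ * ξ) * A ξ + Real.exp (l₂ * ξ) * B ξ = s0 * u ξ i := by
      rw [hrep ξ]; field_simp
    have hgξ : g ξ = β * u ξ i + f (u ξ) i := rfl
    rw [hgξ]
    have hs0ne : s0 ≠ 0 := hs0pos.ne'
    linear_combination ((1 / s0) * (Real.exp (-l₁ * ξ) * A ξ)) * hroot1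
      + ((1 / s0) * (Real.exp (l₂ * ξ) * B ξ)) * hroot2
      - ((1 / s0) * (β * u ξ i + f (u ξ) i)) * hK + (β / s0) * hFG
      - (f (u ξ) i) * (mul_inv_cancel₀ hs0ne)
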